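/- Consider the u-directional blow-up system u̇ = −u[A + u + (AC−B)w + (B+C−1)uw + C(B−1)uw²], ẇ = Aw + uw + ACw² + uw² − Cuw³, with positive real parameters A, B, C. Its equilibrium points on the line {u = 0} are exactly (0,0) and (0, −1/C). The Jacobian matrix at (0,0) has eigenvalues A > 0 and −A < 0, so (0,0) is a hyperbolic saddle; the Jacobian matrix at (0, −1/C) has eigenvalues −A < 0 and −B/C < 0, so (0, −1/C) is a hyperbolic stable node. -/

import Mathlib

/-- Derivative at `0` of a quartic polynomial is its linear coefficient. -/
lemma quartic_hasDerivAt (c0 c1 c2 c3 c4 : ℝ) :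
    HasDerivAt (fun s : ℝ => c0 + c1 * s + c2 * s ^ 2 + c3 * s ^ 3 + c4 * s ^ 4) c1 0 := by
  have h : HasDerivAt (fun s : ℝ => c0 + c1 * s + c2 * s ^ 2 + c3 * s ^ 3 + c4 * s ^ 4)
      (0 + c1 * 1 + c2 * (2 * 0 ^ 1) + c3 * (3 * 0 ^ 2) + c4 * (4 * 0 ^ 3)) 0 := by
    exact ((((hasDerivAt_const (0:ℝ) c0).add (((hasDerivAt_id (0:ℝ))).const_mul c1)).add
      (((hasDerivAt_pow 2 (0:ℝ))).const_mul c2)).add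
      (((hasDerivAt_pow 3 (0:ℝ))).const_mul c3)).add (((hasDerivAt_pow 4 (0:ℝ))).const_mul c4)
  convert h using 1; ring

/-- If `F` is differentiable and has directional derivative `d` along `v` at `p`, and
`d = μ • v` with `v ≠ 0`, then `μ` is an eigenvalue of the Fréchet derivative. -/
lemma eig_of_line (F : ℝ × ℝ → ℝ × ℝ) (hd : Differentiable ℝ F) (p v : ℝ × ℝ) (μ : ℝ)
    (hv : v ≠ 0) (h : HasDerivAt (fun t : ℝ => F (p + t • v)) (μ • v) 0) :
    Module.End.HasEigenvalue (fderiv ℝ F p).toLinearMap μ := by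
  have hline : HasLineDerivAt ℝ F (μ • v) p v := h
  have h2 : (fderiv ℝ F p) v = μ • v :=
    (((hd p).hasFDerivAt.hasLineDerivAt v).unique hline)
  exact Module.End.hasEigenvalue_of_hasEigenvector
    ⟨Module.End.mem_eigenspace_iff.mpr h2, hv⟩

theorem stmt_17 (A B C : ℝ) (hA : 0 < A) (hB : 0 < B) (hC : 0 < C)
    (F : ℝ × ℝ → ℝ × ℝ)
    (hF : ∀ u w : ℝ, F (u, w) =
      (-(u * (A + u + (A * C - B) * w + (B + C - 1) * u * w + C * (B - 1) * u * w ^ 2)),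
       A * w + u * w + A * C * w ^ 2 + u * w ^ 2 - C * u * w ^ 3)) :
    (∀ w : ℝ, F (0, w) = (0, 0) ↔ w = 0 ∨ w = -1 / C) ∧
    Module.End.HasEigenvalue (fderiv ℝ F (0, 0)).toLinearMap A ∧
    Module.End.HasEigenvalue (fderiv ℝ F (0, 0)).toLinearMap (-A) ∧
    0 < A ∧ -A < 0 ∧
    Module.End.HasEigenvalue (fderiv ℝ F (0, -1 / C)).toLinearMap (-A) ∧
    Module.End.HasEigenvalue (fderiv ℝ F (0, -1 / C)).toLinearMap (-(B / C)) ∧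
    -A < 0 ∧ -(B / C) < 0 := by
  have hC0 : C ≠ 0 := ne_of_gt hC
  have hFfun : F = fun p : ℝ × ℝ =>
      (-(p.1 * (A + p.1 + (A * C - B) * p.2 + (B + C - 1) * p.1 * p.2
          + C * (B - 1) * p.1 * p.2 ^ 2)),
       A * p.2 + p.1 * p.2 + A * C * p.2 ^ 2 + p.1 * p.2 ^ 2 - C * p.1 * p.2 ^ 3) := by
    funext p
    obtain ⟨u, w⟩ := p
    exact hF u w
  have hd : Differentiable ℝ F := by
    rw [hFfun]
    fun_prop
  -- helper to compute directional derivatives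
  have key : ∀ (p v d : ℝ × ℝ),
      (∀ t : ℝ, F (p + t • v) = ((fun s : ℝ => (F (p + s • v)).1) t,
        (fun s : ℝ => (F (p + s • v)).2) t)) → True := fun _ _ _ _ => trivial
  refine ⟨?_, ?_, ?_, hA, by linarith, ?_, ?_, by linarith, by have := div_pos hB hC; linarith⟩
  · intro w
    rw [hF]
    constructor
    · intro h
      have h2 : A * w + A * C * w ^ 2 = 0 := by
        have := congrArg Prod.snd h
        simpa using this
      have h3 : A * w * (1 + C * w) = 0 := by ring_nf; ring_nf at h2; linarith
      rcases mul_eq_zero.mp h3 with h4 | h4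
      · left
        rcases mul_eq_zero.mp h4 with h5 | h5
        · exact absurd h5 (ne_of_gt hA)
        · exact h5
      · right
        field_simp
        linarith
    · rintro (rfl | rfl) <;> simp <;> field_simp <;> ring
  · -- eigenvalue A at (0,0), eigenvector (0,1)
    apply eig_of_line F hd _ (0, 1) A (by simp)
    have h : HasDerivAt (fun t : ℝ => ((0 : ℝ) + A * t + (A * C) * t ^ 2 + 0 * t ^ 3 + 0 * t ^ 4))
        A 0 := quartic_hasDerivAt 0 A (A * C) 0 0
    have h0 : HasDerivAt (fun _ : ℝ => (0 : ℝ)) 0 0 := hasDerivAt_const 0 0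
    have := HasDerivAt.prodMk h0 h
    convert this using 1
    · funext t
      simp only [Prod.smul_mk, Prod.mk_add_mk, smul_eq_mul, mul_zero, mul_one, add_zero, zero_add]
      rw [hF]
      rw [Prod.mk.injEq]
      constructor <;> ring
    · simp
  · -- eigenvalue -A at (0,0), eigenvector (1,0)
    apply eig_of_line F hd _ (1, 0) (-A) (by simp)
    have h : HasDerivAt (fun t : ℝ => ((0 : ℝ) + (-A) * t + (-1) * t ^ 2 + 0 * t ^ 3 + 0 * t ^ 4))
        (-A) 0 := quartic_hasDerivAt 0 (-A) (-1) 0 0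
    have h0 : HasDerivAt (fun _ : ℝ => (0 : ℝ)) 0 0 := hasDerivAt_const 0 0
    have := HasDerivAt.prodMk h h0
    convert this using 1
    · funext t
      simp only [Prod.smul_mk, Prod.mk_add_mk, smul_eq_mul, mul_zero, mul_one, add_zero, zero_add]
      rw [hF]
      rw [Prod.mk.injEq]
      constructor <;> ring
    · simp
  · -- eigenvalue -A at (0,-1/C), eigenvector (0,1)
    apply eig_of_line F hd _ (0, 1) (-A) (by simp)
    have h : HasDerivAt (fun t : ℝ =>
        ((A * (-1/C) + A * C * (-1/C)^2) + (-A) * t + (A * C) * t ^ 2 + 0 * t ^ 3 + 0 * t ^ 4))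
        (-A) 0 := quartic_hasDerivAt _ (-A) (A * C) 0 0
    have h0 : HasDerivAt (fun _ : ℝ => (0 : ℝ)) 0 0 := hasDerivAt_const 0 0
    have := HasDerivAt.prodMk h0 h
    convert this using 1
    · funext t
      simp only [Prod.smul_mk, Prod.mk_add_mk, smul_eq_mul, mul_zero, mul_one, add_zero, zero_add]
      rw [hF]
      rw [Prod.mk.injEq]
      constructor
      · ring
      · field_simp; ring
    · simp
  · -- eigenvalue -(B/C) at (0,-1/C)
    by_cases hAB : A = B / C
    · -- then same eigenvector (0,1) as for -A
      rw [← hAB]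
      apply eig_of_line F hd _ (0, 1) (-A) (by simp)
      have h : HasDerivAt (fun t : ℝ =>
          ((A * (-1/C) + A * C * (-1/C)^2) + (-A) * t + (A * C) * t ^ 2 + 0 * t ^ 3 + 0 * t ^ 4))
          (-A) 0 := quartic_hasDerivAt _ (-A) (A * C) 0 0
      have h0 : HasDerivAt (fun _ : ℝ => (0 : ℝ)) 0 0 := hasDerivAt_const 0 0
      have := HasDerivAt.prodMk h0 h
      convert this using 1
      · funext t
        simp only [Prod.smul_mk, Prod.mk_add_mk, smul_eq_mul, mul_zero, mul_one, add_zero,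
          zero_add]
        rw [hF]
        rw [Prod.mk.injEq]
        constructor
        · ring
        · field_simp; ring
      · simp
    · -- generic case: eigenvector (1, t0)
      have hD : A * C - B ≠ 0 := by
        intro h
        apply hAB
        field_simp
        linarith
      set t0 : ℝ := (2 - C) / (C * (A * C - B)) with ht0
      apply eig_of_line F hd _ (1, t0) (-(B/C)) (by simp)
      -- line: s ↦ F (s, -1/C + t0 * s)
      -- first component: -(s * (A + s + (A*C-B)*(-1/C + t0 s) + (B+C-1)*s*(-1/C+t0 s)
      --   + C*(B-1)*s*(-1/C+t0 s)^2))
      -- expand as quartic in s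
      have h1 : HasDerivAt (fun s : ℝ =>
          ((0:ℝ) + (-(A + (A*C-B)*(-1/C))) * s
            + (-(1 + (A*C-B)*t0 + (B+C-1)*(-1/C) + C*(B-1)*(-1/C)^2)) * s ^ 2
            + (-((B+C-1)*t0 + C*(B-1)*(2*(-1/C)*t0))) * s ^ 3
            + (-(C*(B-1)*t0^2)) * s ^ 4))
          (-(A + (A*C-B)*(-1/C))) 0 := quartic_hasDerivAt _ _ _ _ _
      have h2 : HasDerivAt (fun s : ℝ =>
          ((A*(-1/C) + A*C*(-1/C)^2)
            + (A*t0 + (-1/C) + 2*A*C*(-1/C)*t0 + (-1/C)^2 - C*(-1/C)^3) * s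
            + (t0 + A*C*t0^2 + 2*(-1/C)*t0 - C*(3*(-1/C)^2*t0)) * s ^ 2
            + (t0^2 - C*(3*(-1/C)*t0^2)) * s ^ 3
            + (-(C*t0^3)) * s ^ 4))
          (A*t0 + (-1/C) + 2*A*C*(-1/C)*t0 + (-1/C)^2 - C*(-1/C)^3) 0 :=
        quartic_hasDerivAt _ _ _ _ _
      have := HasDerivAt.prodMk h1 h2
      convert this using 1
      · funext s
        simp only [Prod.smul_mk, Prod.mk_add_mk, smul_eq_mul, mul_one, add_zero, zero_add]
        rw [hF]
        rw [Prod.mk.injEq]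
        constructor <;> (field_simp; try ring)
      · have e1 : -(A + (A*C-B)*(-1/C)) = -(B/C) * 1 := by field_simp; ring
        have e2 : A*t0 + (-1/C) + 2*A*C*(-1/C)*t0 + (-1/C)^2 - C*(-1/C)^3 = -(B/C) * t0 := by
          rw [ht0]
          field_simp
          ring
        rw [Prod.smul_mk, smul_eq_mul, smul_eq_mul, e1, e2]
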